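/- For closed cones K and K' in ℝ^d, the three cone angles satisfy ψ(K)/2 ≤ φ(K) ≤ ∠K ≤ ψ(K), where cos(∠K) = max_{u∈K∩S^{d−1}} min_{u'∈K∩S^{d−1}} ⟨u,u'⟩, cos(φ(K)) = max_{u∈S^{d−1}} min_{u'∈K∩S^{d−1}} ⟨u,u'⟩, and cos(ψ(K)) = min_{u,u'∈K∩S^{d−1}} ⟨u,u'⟩. -/

import Mathlib

open scoped BigOperators RealInnerProductSpace
open Real

noncomputable section

lemma arccos_antitone : Antitone Real.arccos := fun x y h => by
  simp only [Real.arccos]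
  linarith [Real.monotone_arcsin h]

/-- Triangle inequality for angles between unit vectors. -/
lemma angle_triangle_unit {E : Type*} [NormedAddCommGroup E] [InnerProductSpace ℝ E]
    {u v w : E} (hu : ‖u‖ = 1) (hv : ‖v‖ = 1) (hw : ‖w‖ = 1) :
    Real.arccos ⟪v, w⟫ ≤ Real.arccos ⟪u, v⟫ + Real.arccos ⟪u, w⟫ := by
  set a : ℝ := ⟪u, v⟫ with ha
  set b : ℝ := ⟪u, w⟫ with hb
  have habs : ∀ x y : E, ‖x‖ = 1 → ‖y‖ = 1 → |(⟪x, y⟫ : ℝ)| ≤ 1 := by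
    intro x y hx hy
    simpa [hx, hy] using abs_real_inner_le_norm x y
  have ha1 : |a| ≤ 1 := habs u v hu hv
  have hb1 : |b| ≤ 1 := habs u w hu hw
  by_cases hπ : Real.arccos a + Real.arccos b ≤ π
  · -- key computation
    have key : Real.cos (Real.arccos a + Real.arccos b) ≤ ⟪v, w⟫ := by
      rw [Real.cos_add, Real.cos_arccos (neg_le_of_abs_le ha1) (le_of_abs_le ha1),
        Real.cos_arccos (neg_le_of_abs_le hb1) (le_of_abs_le hb1),
        Real.sin_arccos, Real.sin_arccos]
      set v' : E := v - a • u with hv'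
      set w' : E := w - b • u with hw'
      have huu : (⟪u, u⟫ : ℝ) = 1 := by
        rw [real_inner_self_eq_norm_sq, hu]; norm_num
      have hvu : (⟪v, u⟫ : ℝ) = a := by rw [ha, real_inner_comm]
      have hwu : (⟪w, u⟫ : ℝ) = b := by rw [hb, real_inner_comm]
      have hvv : (⟪v, v⟫ : ℝ) = 1 := by
        rw [real_inner_self_eq_norm_sq, hv]; norm_num
      have hww : (⟪w, w⟫ : ℝ) = 1 := by
        rw [real_inner_self_eq_norm_sq, hw]; norm_num
      have hvw' : (⟪v', w'⟫ : ℝ) = ⟪v, w⟫ - a * b := by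
        simp only [hv', hw', inner_sub_left, inner_sub_right, real_inner_smul_left,
          real_inner_smul_right, huu, hvu, hwu, ← ha, ← hb]
        ring
      have hnv' : ‖v'‖ = Real.sqrt (1 - a ^ 2) := by
        rw [← Real.sqrt_sq (norm_nonneg v')]
        congr 1
        rw [← real_inner_self_eq_norm_sq]
        simp only [hv', inner_sub_left, inner_sub_right, real_inner_smul_left,
          real_inner_smul_right, huu, hvu, hvv, ← ha]
        ring
      have hnw' : ‖w'‖ = Real.sqrt (1 - b ^ 2) := by
        rw [← Real.sqrt_sq (norm_nonneg w')]
        congr 1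
        rw [← real_inner_self_eq_norm_sq]
        simp only [hw', inner_sub_left, inner_sub_right, real_inner_smul_left,
          real_inner_smul_right, huu, hwu, hww, ← hb]
        ring
      have hcs : -(‖v'‖ * ‖w'‖) ≤ (⟪v', w'⟫ : ℝ) :=
        neg_le_of_abs_le (abs_real_inner_le_norm v' w')
      rw [hnv', hnw'] at hcs
      rw [hvw'] at hcs
      linarith
    have := arccos_antitone key
    calc Real.arccos ⟪v, w⟫ ≤ Real.arccos (Real.cos (Real.arccos a + Real.arccos b)) := this
      _ = Real.arccos a + Real.arccos b := Real.arccos_cos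
          (add_nonneg (Real.arccos_nonneg _) (Real.arccos_nonneg _)) hπ
  · push_neg at hπ
    exact le_trans (Real.arccos_le_pi _) hπ.le

variable {d : ℕ}

/-- `cos(∠K) = max_{u ∈ K ∩ S} min_{u' ∈ K ∩ S} ⟨u, u'⟩`. -/
def coneAngle (K : Set (EuclideanSpace ℝ (Fin d))) : ℝ :=
  Real.arccos (sSup ((fun u => sInf ((fun u'ₑ => (⟪u, u'ₑ⟫ : ℝ)) ''
    (K ∩ Metric.sphere 0 1))) '' (K ∩ Metric.sphere 0 1)))

/-- `cos(φ(K)) = max_{u ∈ S^{d−1}} min_{u' ∈ K ∩ S} ⟨u, u'⟩`. -/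
def conePhi (K : Set (EuclideanSpace ℝ (Fin d))) : ℝ :=
  Real.arccos (sSup ((fun u => sInf ((fun u'ₑ => (⟪u, u'ₑ⟫ : ℝ)) ''
    (K ∩ Metric.sphere 0 1))) '' (Metric.sphere (0 : EuclideanSpace ℝ (Fin d)) 1)))

/-- `cos(ψ(K)) = min_{u, u' ∈ K ∩ S} ⟨u, u'⟩`. -/
def conePsi (K : Set (EuclideanSpace ℝ (Fin d))) : ℝ :=
  Real.arccos (sInf { r : ℝ | ∃ u ∈ K ∩ Metric.sphere 0 1, ∃ u' ∈ K ∩ Metric.sphere 0 1,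
    r = (⟪u, u'⟫ : ℝ) })

/-- For a nonempty closed cone `K ⊆ ℝ^d`, the three cone angles satisfy
`ψ(K)/2 ≤ φ(K) ≤ ∠K ≤ ψ(K)`. -/
theorem cone_angles_relation (K : Set (EuclideanSpace ℝ (Fin d)))
    (hclosed : IsClosed K)
    (hcone : ∀ t : ℝ, 0 < t → ∀ x ∈ K, t • x ∈ K)
    (hne : (K ∩ Metric.sphere 0 1).Nonempty) :
    conePsi K / 2 ≤ conePhi K ∧ conePhi K ≤ coneAngle K ∧ coneAngle K ≤ conePsi K := by
  classical
  simp only [coneAngle, conePhi, conePsi]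
  set S : Set (EuclideanSpace ℝ (Fin d)) := Metric.sphere 0 1 with hS
  set C : Set (EuclideanSpace ℝ (Fin d)) := K ∩ S with hC
  set f : EuclideanSpace ℝ (Fin d) → ℝ := fun u => sInf ((fun u'ₑ => (⟪u, u'ₑ⟫ : ℝ)) '' C) with hf
  set P : Set ℝ := { r : ℝ | ∃ u ∈ C, ∃ u' ∈ C, r = (⟪u, u'⟫ : ℝ) } with hP
  obtain ⟨u₀, hu₀K, hu₀S⟩ := hne
  have hC₀ : u₀ ∈ C := ⟨hu₀K, hu₀S⟩
  have hmemS : ∀ x ∈ S, ‖x‖ = 1 := by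
    intro x hx; simpa [hS, mem_sphere_zero_iff_norm] using hx
  have hCS : C ⊆ S := Set.inter_subset_right
  have hbound : ∀ x ∈ S, ∀ y ∈ S, -1 ≤ (⟪x, y⟫ : ℝ) ∧ (⟪x, y⟫ : ℝ) ≤ 1 := by
    intro x hx y hy
    have h := abs_real_inner_le_norm x y
    rw [hmemS x hx, hmemS y hy] at h
    exact ⟨by linarith [neg_le_of_abs_le h], by linarith [le_of_abs_le h]⟩
  have himg_ne : ∀ u : EuclideanSpace ℝ (Fin d), ((fun u'ₑ => (⟪u, u'ₑ⟫ : ℝ)) '' C).Nonempty :=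
    fun u => ⟨_, u₀, hC₀, rfl⟩
  have himg_bdd : ∀ u ∈ S, ∀ r ∈ (fun u'ₑ => (⟪u, u'ₑ⟫ : ℝ)) '' C, -1 ≤ r ∧ r ≤ 1 := by
    rintro u hu r ⟨u', hu', rfl⟩
    exact hbound u hu u' (hCS hu')
  have hbdd : ∀ u ∈ S, BddBelow ((fun u'ₑ => (⟪u, u'ₑ⟫ : ℝ)) '' C) := by
    intro u hu
    exact ⟨-1, fun r hr => (himg_bdd u hu r hr).1⟩
  have hf_le : ∀ u ∈ S, ∀ u' ∈ C, f u ≤ (⟪u, u'⟫ : ℝ) := by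
    intro u hu u' hu'
    exact csInf_le (hbdd u hu) ⟨u', hu', rfl⟩
  have hf_ge : ∀ u ∈ S, -1 ≤ f u := by
    intro u hu
    exact le_csInf (himg_ne u) (fun r hr => (himg_bdd u hu r hr).1)
  have hf_le1 : ∀ u ∈ S, f u ≤ 1 :=
    fun u hu => (hf_le u hu u₀ hC₀).trans (hbound u hu u₀ (hCS hC₀)).2
  -- the three cosine values
  set A : ℝ := sSup (f '' C) with hA
  set B : ℝ := sSup (f '' S) with hB
  set M : ℝ := sInf P with hM
  have hBddB : BddAbove (f '' S) := by
    refine ⟨1, ?_⟩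
    rintro r ⟨u, hu, rfl⟩
    exact hf_le1 u hu
  have hBddA : BddAbove (f '' C) := by
    refine ⟨1, ?_⟩
    rintro r ⟨u, hu, rfl⟩
    exact hf_le1 u (hCS hu)
  have hPne : P.Nonempty := ⟨_, u₀, hC₀, u₀, hC₀, rfl⟩
  have hPbdd : BddBelow P := by
    refine ⟨-1, ?_⟩
    rintro r ⟨u, hu, u', hu', rfl⟩
    exact (hbound u (hCS hu) u' (hCS hu')).1
  -- A ≤ B : subset of suprema
  have hA_le_B : A ≤ B :=
    csSup_le_csSup hBddB ⟨f u₀, u₀, hC₀, rfl⟩ (Set.image_mono (f := f) hCS)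
  -- M ≤ A
  have hM_le_A : M ≤ A := by
    have h1 : M ≤ f u₀ :=
      le_csInf (himg_ne u₀) (by rintro r ⟨u', hu', rfl⟩
                                exact csInf_le hPbdd ⟨u₀, hC₀, u', hu', rfl⟩)
    exact h1.trans (le_csSup hBddA ⟨u₀, hC₀, rfl⟩)
  -- compactness: M is attained
  have hCcomp : IsCompact C := (isCompact_sphere (0 : EuclideanSpace ℝ (Fin d)) 1).inter_left hclosed
  have hPcomp : IsCompact P := by
    have : P = (fun p : EuclideanSpace ℝ (Fin d) × EuclideanSpace ℝ (Fin d) => (⟪p.1, p.2⟫ : ℝ)) '' (C ×ˢ C) := by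
      ext r
      constructor
      · rintro ⟨u, hu, u', hu', rfl⟩
        exact ⟨(u, u'), ⟨hu, hu'⟩, rfl⟩
      · rintro ⟨⟨u, u'⟩, ⟨hu, hu'⟩, rfl⟩
        exact ⟨u, hu, u', hu', rfl⟩
    rw [this]
    exact (hCcomp.prod hCcomp).image continuous_inner
  have hM_mem : M ∈ P := hPcomp.sInf_mem hPne
  obtain ⟨v, hvC, w, hwC, hMvw⟩ := hM_mem
  -- ψ, the largest angle
  set ψ : ℝ := Real.arccos M with hψ
  have hψ_nonneg : 0 ≤ ψ := Real.arccos_nonneg M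
  have hψ_le_pi : ψ ≤ π := Real.arccos_le_pi M
  -- key bound : f u ≤ cos (ψ/2) for all unit u
  have hkey : ∀ u ∈ S, f u ≤ Real.cos (ψ / 2) := by
    intro u hu
    have htri : ψ ≤ Real.arccos ⟪u, v⟫ + Real.arccos ⟪u, w⟫ := by
      rw [hψ, hMvw]
      exact angle_triangle_unit (hmemS u hu) (hmemS v (hCS hvC)) (hmemS w (hCS hwC))
    have hcos : ∀ z ∈ C, ψ / 2 ≤ Real.arccos ⟪u, z⟫ → f u ≤ Real.cos (ψ / 2) := by
      intro z hz hzle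
      have h1 : (⟪u, z⟫ : ℝ) = Real.cos (Real.arccos ⟪u, z⟫) :=
        (Real.cos_arccos (hbound u hu z (hCS hz)).1 (hbound u hu z (hCS hz)).2).symm
      have h2 : Real.cos (Real.arccos ⟪u, z⟫) ≤ Real.cos (ψ / 2) :=
        Real.cos_le_cos_of_nonneg_of_le_pi (by linarith) (Real.arccos_le_pi _) hzle
      calc f u ≤ ⟪u, z⟫ := hf_le u hu z hz
        _ ≤ Real.cos (ψ / 2) := h1 ▸ h2
    rcases le_or_gt (ψ / 2) (Real.arccos ⟪u, v⟫) with h | h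
    · exact hcos v hvC h
    · exact hcos w hwC (by linarith)
  have hB_le : B ≤ Real.cos (ψ / 2) := by
    refine csSup_le ⟨f u₀, u₀, hCS hC₀, rfl⟩ ?_
    rintro r ⟨u, hu, rfl⟩
    exact hkey u hu
  refine ⟨?_, arccos_antitone hA_le_B, arccos_antitone hM_le_A⟩
  calc ψ / 2 = Real.arccos (Real.cos (ψ / 2)) :=
        (Real.arccos_cos (by linarith) (by linarith [Real.pi_pos])).symm
    _ ≤ Real.arccos B := arccos_antitone hB_le
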